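/- Let L be an e-cyclic residuated lattice satisfying the left prelinearity law, and let H be a convex subalgebra of L. Then the following are equivalent: (1) H is prime; (2) for all a, b ∈ L, |a| ∨ |b| ∈ H implies a ∈ H or b ∈ H; (3) for all a, b ∈ L, |a| ∨ |b| = e implies a ∈ H or b ∈ H; (4) for all a, b ∈ L, (a\b) ∧ e ∈ H or (b\a) ∧ e ∈ H; (5) the set of convex subalgebras of L containing H is totally ordered by set-inclusion. -/
import Mathlib


universe u

/-- A residuated lattice: a lattice-ordered monoid with left and right residuals.
`ldiv x z` is `x \ z` and `rdiv z y` is `z / y`. -/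
class ResiduatedLattice (α : Type u) extends Lattice α, Monoid α where
  ldiv : α → α → α
  rdiv : α → α → α
  mul_le_iff_le_ldiv : ∀ x y z : α, x * y ≤ z ↔ y ≤ ldiv x z
  mul_le_iff_le_rdiv : ∀ x y z : α, x * y ≤ z ↔ x ≤ rdiv z y

namespace ResiduatedLattice

variable {α : Type u} [ResiduatedLattice α]

/-- `L` is e-cyclic if `x \ e = e / x` for all `x`. -/
def ECyclic (α : Type u) [ResiduatedLattice α] : Prop :=
  ∀ x : α, ldiv x 1 = rdiv 1 x

/-- Absolute value: `|x| = x ⊓ (e / x) ⊓ e`. -/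
def absv (x : α) : α := x ⊓ rdiv 1 x ⊓ 1

/-- A convex subalgebra: contains `e`, closed under all the operations, and order-convex. -/
structure IsConvexSubalgebra (H : Set α) : Prop where
  one_mem : (1 : α) ∈ H
  mul_mem : ∀ ⦃x⦄, x ∈ H → ∀ ⦃y⦄, y ∈ H → x * y ∈ H
  sup_mem : ∀ ⦃x⦄, x ∈ H → ∀ ⦃y⦄, y ∈ H → x ⊔ y ∈ H
  inf_mem : ∀ ⦃x⦄, x ∈ H → ∀ ⦃y⦄, y ∈ H → x ⊓ y ∈ H
  ldiv_mem : ∀ ⦃x⦄, x ∈ H → ∀ ⦃y⦄, y ∈ H → ldiv x y ∈ H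
  rdiv_mem : ∀ ⦃x⦄, x ∈ H → ∀ ⦃y⦄, y ∈ H → rdiv x y ∈ H
  convex : ∀ ⦃a⦄, a ∈ H → ∀ ⦃b⦄, b ∈ H → ∀ ⦃x⦄, a ≤ x → x ≤ b → x ∈ H

/-- `C[S]`: the smallest convex subalgebra containing `S`. -/
def convexClosure (S : Set α) : Set α :=
  ⋂₀ {H : Set α | IsConvexSubalgebra H ∧ S ⊆ H}

end ResiduatedLattice

open ResiduatedLattice

set_option linter.unusedSectionVars false
set_option linter.unusedVariables false


section Aux
variable {α : Type u} [ResiduatedLattice α]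

lemma ldiv_iff {x y z : α} : x * y ≤ z ↔ y ≤ ldiv x z := mul_le_iff_le_ldiv x y z
lemma rdiv_iff {x y z : α} : x * y ≤ z ↔ x ≤ rdiv z y := mul_le_iff_le_rdiv x y z

lemma rl_mul_le_mul {a b c d : α} (h1 : a ≤ b) (h2 : c ≤ d) : a * c ≤ b * d := by
  have h3 : b * c ≤ b * d := ldiv_iff.mpr (le_trans h2 (ldiv_iff.mp le_rfl))
  exact le_trans (rdiv_iff.mpr (le_trans h1 (rdiv_iff.mp le_rfl))) h3

lemma rl_mul_sup (a b c : α) : a * (b ⊔ c) = a * b ⊔ a * c :=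
  le_antisymm
    (ldiv_iff.mpr (sup_le (ldiv_iff.mp le_sup_left) (ldiv_iff.mp le_sup_right)))
    (sup_le (rl_mul_le_mul le_rfl le_sup_left) (rl_mul_le_mul le_rfl le_sup_right))

lemma rl_sup_mul (a b c : α) : (a ⊔ b) * c = a * c ⊔ b * c :=
  le_antisymm
    (rdiv_iff.mpr (sup_le (rdiv_iff.mp le_sup_left) (rdiv_iff.mp le_sup_right)))
    (sup_le (rl_mul_le_mul le_sup_left le_rfl) (rl_mul_le_mul le_sup_right le_rfl))

lemma rl_mul_le_left {a b : α} (h : b ≤ 1) : a * b ≤ a := by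
  simpa using rl_mul_le_mul (le_refl a) h

lemma rl_mul_le_right {a b : α} (h : a ≤ 1) : a * b ≤ b := by
  simpa using rl_mul_le_mul h (le_refl b)

lemma rl_mul_le_one {a b : α} (ha : a ≤ 1) (hb : b ≤ 1) : a * b ≤ 1 :=
  le_trans (rl_mul_le_left hb) ha

lemma absv_le_one (x : α) : absv x ≤ 1 := inf_le_right
lemma absv_le_self (x : α) : absv x ≤ x := le_trans inf_le_left inf_le_left
lemma absv_le_rdiv (x : α) : absv x ≤ rdiv 1 x := le_trans inf_le_left inf_le_right

lemma rdiv_mul_self_le_one (x : α) : rdiv 1 x * x ≤ 1 := rdiv_iff.mpr le_rfl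

lemma absv_mul_self_le_one (x : α) : absv x * x ≤ 1 :=
  le_trans (rl_mul_le_mul (absv_le_rdiv x) le_rfl) (rdiv_mul_self_le_one x)

lemma self_mul_rdiv_le_one (hec : ECyclic α) (x : α) : x * rdiv 1 x ≤ 1 := by
  rw [← hec x]; exact ldiv_iff.mpr le_rfl

lemma self_mul_absv_le_one (hec : ECyclic α) (x : α) : x * absv x ≤ 1 :=
  le_trans (rl_mul_le_mul le_rfl (absv_le_rdiv x)) (self_mul_rdiv_le_one hec x)

lemma le_rdiv_one_of_left {x z : α} (h : z * x ≤ 1) : z ≤ rdiv 1 x := rdiv_iff.mp h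

lemma le_rdiv_one_of_right (hec : ECyclic α) {x z : α} (h : x * z ≤ 1) : z ≤ rdiv 1 x := by
  rw [← hec x]; exact ldiv_iff.mp h

lemma le_absv {p x : α} (h1 : p ≤ x) (h2 : p ≤ rdiv 1 x) (h3 : p ≤ 1) : p ≤ absv x :=
  le_inf (le_inf h1 h2) h3

lemma absv_one : absv (1:α) = 1 :=
  le_antisymm (absv_le_one 1)
    (le_absv le_rfl (le_rdiv_one_of_left (one_mul (1:α)).le) le_rfl)

lemma le_self_absv {u : α} (hu : u ≤ 1) : u ≤ absv u :=
  le_absv le_rfl (le_rdiv_one_of_left (rl_mul_le_one hu hu)) hu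

lemma mul_absv_left_le_one {p x : α} (hp : p ≤ absv x) : p * x ≤ 1 :=
  le_trans (rl_mul_le_mul (hp.trans (absv_le_rdiv x)) le_rfl) (rdiv_mul_self_le_one x)

lemma mul_absv_right_le_one (hec : ECyclic α) {p x : α} (hp : p ≤ absv x) : x * p ≤ 1 :=
  le_trans (rl_mul_le_mul le_rfl (hp.trans (absv_le_rdiv x))) (self_mul_rdiv_le_one hec x)

lemma absv_mem {H : Set α} (hH : IsConvexSubalgebra H) {x : α} (hx : x ∈ H) : absv x ∈ H :=
  hH.inf_mem (hH.inf_mem hx (hH.rdiv_mem hH.one_mem hx)) hH.one_mem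

lemma mem_of_absv_mem {H : Set α} (hH : IsConvexSubalgebra H) {x : α} (hx : absv x ∈ H) :
    x ∈ H :=
  hH.convex hx (hH.ldiv_mem hx hH.one_mem) (absv_le_self x)
    (ldiv_iff.mp (absv_mul_self_le_one x))

lemma list_prod_le_one {l : List α} (h : ∀ w ∈ l, w ≤ 1) : l.prod ≤ 1 := by
  induction l with
  | nil => simp
  | cons a t ih =>
    simp only [List.prod_cons]
    exact rl_mul_le_one (h a (by simp)) (ih fun w hw => h w (by simp [hw]))

end Aux

section Gen
variable {α : Type u} [ResiduatedLattice α]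

variable {x y p q : α}

lemma key_le_p (hp : p ≤ absv x) (hq : q ≤ absv y) : p * q * (q * p) ≤ p :=
  le_trans (rl_mul_le_left (rl_mul_le_one (hq.trans (absv_le_one y)) (hp.trans (absv_le_one x))))
    (rl_mul_le_left (hq.trans (absv_le_one y)))

lemma key_le_q (hp : p ≤ absv x) (hq : q ≤ absv y) : p * q * (q * p) ≤ q :=
  le_trans (rl_mul_le_right (rl_mul_le_one (hp.trans (absv_le_one x)) (hq.trans (absv_le_one y))))
    (rl_mul_le_left (hp.trans (absv_le_one x)))

lemma key_le_one (hp : p ≤ absv x) (hq : q ≤ absv y) : p * q * (q * p) ≤ 1 :=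
  (key_le_p hp hq).trans ((hp.trans (absv_le_one x)))

lemma key_le_qp (hp : p ≤ absv x) (hq : q ≤ absv y) : p * q * (q * p) ≤ q * p :=
  rl_mul_le_right (rl_mul_le_one (hp.trans (absv_le_one x)) (hq.trans (absv_le_one y)))

lemma key_le_pq (hp : p ≤ absv x) (hq : q ≤ absv y) : p * q * (q * p) ≤ p * q :=
  rl_mul_le_left (rl_mul_le_one (hq.trans (absv_le_one y)) (hp.trans (absv_le_one x)))

lemma key_ldiv (hec : ECyclic α) (hp : p ≤ absv x) (hq : q ≤ absv y) :
    p * q * (q * p) ≤ absv (ldiv x y) := by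
  apply le_absv _ _ (key_le_one hp hq)
  · refine (key_le_pq hp hq).trans (ldiv_iff.mp ?_)
    calc x * (p * q) = x * p * q := by rw [mul_assoc]
      _ ≤ 1 * q := rl_mul_le_mul (mul_absv_right_le_one hec hp) le_rfl
      _ = q := one_mul q
      _ ≤ y := hq.trans (absv_le_self y)
  · apply le_rdiv_one_of_right hec
    have h2 : ldiv x y * q ≤ ldiv x 1 := by
      apply ldiv_iff.mp
      calc x * (ldiv x y * q) = x * ldiv x y * q := by rw [mul_assoc]
        _ ≤ y * q := rl_mul_le_mul (ldiv_iff.mpr le_rfl) le_rfl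
        _ ≤ 1 := mul_absv_right_le_one hec hq
    have h3 : ldiv x y * (q * p) ≤ 1 := by
      calc ldiv x y * (q * p) = ldiv x y * q * p := by rw [mul_assoc]
        _ ≤ ldiv x 1 * p := rl_mul_le_mul h2 le_rfl
        _ = rdiv 1 x * p := by rw [hec x]
        _ ≤ rdiv 1 x * x := rl_mul_le_mul le_rfl (hp.trans (absv_le_self x))
        _ ≤ 1 := rdiv_mul_self_le_one x
    exact le_trans (rl_mul_le_mul le_rfl (key_le_qp hp hq)) h3

lemma key_rdiv (hec : ECyclic α) (hp : p ≤ absv x) (hq : q ≤ absv y) :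
    p * q * (q * p) ≤ absv (rdiv x y) := by
  apply le_absv _ _ (key_le_one hp hq)
  · refine (key_le_pq hp hq).trans (rdiv_iff.mp ?_)
    calc p * q * y = p * (q * y) := by rw [mul_assoc]
      _ ≤ p * 1 := rl_mul_le_mul le_rfl (mul_absv_left_le_one hq)
      _ = p := mul_one p
      _ ≤ x := hp.trans (absv_le_self x)
  · apply le_rdiv_one_of_right hec
    have h3 : rdiv x y * (q * p) ≤ 1 := by
      calc rdiv x y * (q * p) = rdiv x y * q * p := by rw [mul_assoc]
        _ ≤ x * p := rl_mul_le_mul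
            (le_trans (rl_mul_le_mul le_rfl (hq.trans (absv_le_self y))) (rdiv_iff.mpr le_rfl))
            le_rfl
        _ ≤ 1 := mul_absv_right_le_one hec hp
    exact le_trans (rl_mul_le_mul le_rfl (key_le_qp hp hq)) h3

lemma key_mul (hec : ECyclic α) (hp : p ≤ absv x) (hq : q ≤ absv y) :
    p * q * (q * p) ≤ absv (x * y) := by
  apply le_absv _ _ (key_le_one hp hq)
  · exact (key_le_pq hp hq).trans
      (rl_mul_le_mul (hp.trans (absv_le_self x)) (hq.trans (absv_le_self y)))
  · apply le_rdiv_one_of_right hec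
    have h3 : x * y * (q * p) ≤ 1 := by
      calc x * y * (q * p) = x * (y * q) * p := by rw [mul_assoc, mul_assoc, mul_assoc]
        _ ≤ x * 1 * p := rl_mul_le_mul (rl_mul_le_mul le_rfl (mul_absv_right_le_one hec hq)) le_rfl
        _ = x * p := by rw [mul_one]
        _ ≤ 1 := mul_absv_right_le_one hec hp
    exact le_trans (rl_mul_le_mul le_rfl (key_le_qp hp hq)) h3

lemma key_sup (hp : p ≤ absv x) (hq : q ≤ absv y) :
    p * q * (q * p) ≤ absv (x ⊔ y) := by
  apply le_absv _ _ (key_le_one hp hq)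
  · exact (key_le_p hp hq).trans ((hp.trans (absv_le_self x)).trans le_sup_left)
  · apply le_rdiv_one_of_left
    rw [rl_mul_sup]
    apply sup_le
    · exact le_trans (rl_mul_le_mul (key_le_p hp hq) le_rfl)
        (mul_absv_left_le_one hp)
    · exact le_trans (rl_mul_le_mul (key_le_q hp hq) le_rfl)
        (mul_absv_left_le_one hq)

lemma key_inf (hp : p ≤ absv x) (hq : q ≤ absv y) :
    p * q * (q * p) ≤ absv (x ⊓ y) := by
  apply le_absv _ _ (key_le_one hp hq)
  · exact le_inf ((key_le_p hp hq).trans (hp.trans (absv_le_self x)))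
      ((key_le_q hp hq).trans (hq.trans (absv_le_self y)))
  · apply le_rdiv_one_of_left
    exact le_trans (rl_mul_le_mul (key_le_p hp hq) inf_le_left) (mul_absv_left_le_one hp)

lemma key_convex {a b : α} (hp : p ≤ absv a) (hq : q ≤ absv b)
    (hax : a ≤ x) (hxb : x ≤ b) : p * q * (q * p) ≤ absv x := by
  apply le_absv _ _ (key_le_one hp hq)
  · exact (key_le_p hp hq).trans ((hp.trans (absv_le_self a)).trans hax)
  · apply le_rdiv_one_of_left
    exact le_trans (rl_mul_le_mul (key_le_q hp hq) hxb) (mul_absv_left_le_one hq)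

def genSet (S : Set α) : Set α :=
  {x | ∃ l : List α, (∀ w ∈ l, w ∈ S) ∧ l.prod ≤ absv x}

lemma append4_mem {S : Set α} {lp lq : List α} (hlp : ∀ w ∈ lp, w ∈ S)
    (hlq : ∀ w ∈ lq, w ∈ S) : ∀ w ∈ lp ++ lq ++ lq ++ lp, w ∈ S := by
  intro w hw
  simp only [List.mem_append] at hw
  rcases hw with ((h | h) | h) | h
  exacts [hlp _ h, hlq _ h, hlq _ h, hlp _ h]

lemma genSet_isConvex (hec : ECyclic α) {S : Set α} (hS : ∀ s ∈ S, s ≤ 1) :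
    IsConvexSubalgebra (genSet S) where
  one_mem := ⟨[], by simp, by simp [absv_one]⟩
  mul_mem := by
    rintro x ⟨lp, hlp, hp⟩ y ⟨lq, hlq, hq⟩
    exact ⟨lp ++ lq ++ lq ++ lp, append4_mem hlp hlq,
      by simpa [List.prod_append, mul_assoc] using key_mul hec hp hq⟩
  sup_mem := by
    rintro x ⟨lp, hlp, hp⟩ y ⟨lq, hlq, hq⟩
    exact ⟨lp ++ lq ++ lq ++ lp, append4_mem hlp hlq,
      by simpa [List.prod_append, mul_assoc] using key_sup hp hq⟩
  inf_mem := by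
    rintro x ⟨lp, hlp, hp⟩ y ⟨lq, hlq, hq⟩
    exact ⟨lp ++ lq ++ lq ++ lp, append4_mem hlp hlq,
      by simpa [List.prod_append, mul_assoc] using key_inf hp hq⟩
  ldiv_mem := by
    rintro x ⟨lp, hlp, hp⟩ y ⟨lq, hlq, hq⟩
    exact ⟨lp ++ lq ++ lq ++ lp, append4_mem hlp hlq,
      by simpa [List.prod_append, mul_assoc] using key_ldiv hec hp hq⟩
  rdiv_mem := by
    rintro x ⟨lp, hlp, hp⟩ y ⟨lq, hlq, hq⟩
    exact ⟨lp ++ lq ++ lq ++ lp, append4_mem hlp hlq,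
      by simpa [List.prod_append, mul_assoc] using key_rdiv hec hp hq⟩
  convex := by
    rintro a ⟨lp, hlp, hp⟩ b ⟨lq, hlq, hq⟩ x hax hxb
    exact ⟨lp ++ lq ++ lq ++ lp, append4_mem hlp hlq,
      by simpa [List.prod_append, mul_assoc] using key_convex hp hq hax hxb⟩

end Gen

section Sub
variable {α : Type u} [ResiduatedLattice α]

lemma rl_sup_mul_one {a b c : α} (ha : a ≤ 1) (hab : a ⊔ b = 1) (hac : a ⊔ c = 1) :
    a ⊔ b * c = 1 := by
  have hb : b ≤ 1 := le_sup_right.trans hab.le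
  have hc : c ≤ 1 := le_sup_right.trans hac.le
  apply le_antisymm (sup_le ha (rl_mul_le_one hb hc))
  calc (1:α) = (a ⊔ b) * (a ⊔ c) := by rw [hab, hac, one_mul]
    _ = a * a ⊔ a * c ⊔ (b * a ⊔ b * c) := by rw [rl_sup_mul, rl_mul_sup, rl_mul_sup]
    _ ≤ a ⊔ b * c := by
        apply sup_le (sup_le _ _) (sup_le _ le_sup_right)
        · exact le_trans (rl_mul_le_left ha) le_sup_left
        · exact le_trans (rl_mul_le_left hc) le_sup_left
        · exact le_trans (rl_mul_le_right hb) le_sup_left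

lemma rl_pow_le_one {a : α} (ha : a ≤ 1) : ∀ n, a ^ n ≤ 1 := by
  intro n
  induction n with
  | zero => simp
  | succ n ih => rw [pow_succ]; exact rl_mul_le_one ih ha

lemma rl_sup_pow_one_aux {a b : α} (ha : a ≤ 1) (hab : a ⊔ b = 1) :
    ∀ k, a ⊔ b ^ k = 1 := by
  intro k
  induction k with
  | zero => rw [pow_zero]; exact sup_eq_right.mpr ha
  | succ k ih => rw [pow_succ]; exact rl_sup_mul_one ha ih hab

lemma rl_sup_pow_one {u v : α} (hu : u ≤ 1) (hv : v ≤ 1) (huv : u ⊔ v = 1) (n m : ℕ) :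
    u ^ n ⊔ v ^ m = 1 := by
  have h1 : v ^ m ⊔ u = 1 := by rw [sup_comm]; exact rl_sup_pow_one_aux hu huv m
  rw [sup_comm]
  exact rl_sup_pow_one_aux (rl_pow_le_one hv m) h1 n

lemma rl_prod_const {u : α} : ∀ {l : List α}, (∀ w ∈ l, w = u) → l.prod = u ^ l.length := by
  intro l
  induction l with
  | nil => simp
  | cons w t ih =>
    intro h
    rw [List.prod_cons, h w (by simp), ih (fun z hz => h z (by simp [hz])),
      List.length_cons, pow_succ']

open Classical in
/-- Replace each occurrence of `v` by `1`. -/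
noncomputable def vsubst (v w : α) : α := if w = v then 1 else w

lemma vsubst_of_eq {v w : α} (h : w = v) : vsubst v w = 1 := by
  rw [vsubst, if_pos h]

lemma vsubst_of_ne {v w : α} (h : ¬ w = v) : vsubst v w = w := by
  rw [vsubst, if_neg h]

lemma subst_lemma {u v : α} (hu : u ≤ 1) (hv : v ≤ 1) (huv : u ⊔ v = 1) :
    ∀ l : List α, (∀ w ∈ l, w ≤ 1) →
      (l.map (vsubst v)).prod ≤ u ⊔ l.prod := by
  intro l
  induction l with
  | nil => intro _; simpa using le_sup_right
  | cons w t ih =>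
    intro hneg
    have hw1 : w ≤ 1 := hneg w (by simp)
    have ht : ∀ z ∈ t, z ≤ 1 := fun z hz => hneg z (by simp [hz])
    have IH := ih ht
    have hQ1 : (t.map (vsubst v)).prod ≤ 1 := by
      apply list_prod_le_one
      intro z hz
      obtain ⟨w', hw', rfl⟩ := List.mem_map.mp hz
      by_cases h : w' = v
      · rw [vsubst_of_eq h]
      · rw [vsubst_of_ne h]; exact ht _ hw'
    simp only [List.map_cons, List.prod_cons]
    by_cases hwv : w = v
    · rw [vsubst_of_eq hwv, one_mul, hwv]
      calc (t.map (vsubst v)).prod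
          = (u ⊔ v) * (t.map (vsubst v)).prod := by rw [huv, one_mul]
        _ = u * _ ⊔ v * _ := rl_sup_mul u v _
        _ ≤ u ⊔ v * t.prod := by
            apply sup_le (le_trans (rl_mul_le_left hQ1) le_sup_left)
            calc v * (t.map (vsubst v)).prod
                ≤ v * (u ⊔ t.prod) := rl_mul_le_mul le_rfl IH
              _ = v * u ⊔ v * t.prod := rl_mul_sup v u t.prod
              _ ≤ u ⊔ v * t.prod := sup_le (le_trans (rl_mul_le_right hv) le_sup_left) le_sup_right
    · rw [vsubst_of_ne hwv]
      calc w * (t.map (vsubst v)).prod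
          ≤ w * (u ⊔ t.prod) := rl_mul_le_mul le_rfl IH
        _ = w * u ⊔ w * t.prod := rl_mul_sup w u t.prod
        _ ≤ u ⊔ w * t.prod := sup_le (le_trans (rl_mul_le_right hw1) le_sup_left) le_sup_right

lemma map_prod_mem {H : Set α} (hH : IsConvexSubalgebra H) (v : α) :
    ∀ l : List α, (∀ w ∈ l, (w ∈ H ∧ w ≤ 1) ∨ w = v) →
      (l.map (vsubst v)).prod ∈ H := by
  intro l
  induction l with
  | nil => intro _; simpa using hH.one_mem
  | cons w t ih =>
    intro h
    simp only [List.map_cons, List.prod_cons]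
    apply hH.mul_mem _ (ih fun z hz => h z (by simp [hz]))
    by_cases hwv : w = v
    · rw [vsubst_of_eq hwv]; exact hH.one_mem
    · rw [vsubst_of_ne hwv]
      rcases h w (by simp) with ⟨hw, _⟩ | hw
      · exact hw
      · exact absurd hw hwv

lemma mem_H_of_mem_gen (hec : ECyclic α) {H : Set α} (hH : IsConvexSubalgebra H)
    {u v : α} (hu : u ≤ 1) (hv : v ≤ 1) (huv : u ⊔ v = 1)
    (hmem : u ∈ genSet {w : α | (w ∈ H ∧ w ≤ 1) ∨ w = v}) : u ∈ H := by
  obtain ⟨l, hl, hprod⟩ := hmem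
  have hneg : ∀ w ∈ l, w ≤ 1 := fun w hw => (hl w hw).elim (fun h => h.2) (fun h => h ▸ hv)
  have hQH : (l.map (vsubst v)).prod ∈ H := map_prod_mem hH v l hl
  have hQu : (l.map (vsubst v)).prod ≤ u := by
    refine le_trans (subst_lemma hu hv huv l hneg) (sup_le le_rfl ?_)
    exact hprod.trans (absv_le_self u)
  exact hH.convex hQH hH.one_mem hQu hu

end Sub

/-- characterizations of prime convex subalgebras under left prelinearity. -/
theorem stmt8 {α : Type u} [ResiduatedLattice α] (hec : ECyclic α)
    (hpre : ∀ x y : α, (ldiv x y ⊓ 1) ⊔ (ldiv y x ⊓ 1) = 1)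
    (H : Set α) (hH : IsConvexSubalgebra H) :
    List.TFAE [
      (∀ X Y : Set α, IsConvexSubalgebra X → IsConvexSubalgebra Y →
        X ∩ Y ⊆ H → X ⊆ H ∨ Y ⊆ H),
      (∀ a b : α, absv a ⊔ absv b ∈ H → a ∈ H ∨ b ∈ H),
      (∀ a b : α, absv a ⊔ absv b = 1 → a ∈ H ∨ b ∈ H),
      (∀ a b : α, ldiv a b ⊓ 1 ∈ H ∨ ldiv b a ⊓ 1 ∈ H),
      IsChain (· ⊆ ·) {K : Set α | IsConvexSubalgebra K ∧ H ⊆ K}] := by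
  tfae_have 2 → 3 := by
    intro h2 a b hab
    exact h2 a b (hab ▸ hH.one_mem)
  tfae_have 3 → 4 := by
    intro h3 a b
    set u := ldiv a b ⊓ 1 with hu_def
    set v := ldiv b a ⊓ 1 with hv_def
    have hu1 : u ≤ 1 := inf_le_right
    have hv1 : v ≤ 1 := inf_le_right
    have huv : u ⊔ v = 1 := hpre a b
    apply h3 u v
    have hsq : ∀ w : α, w ≤ 1 → w * w ≤ absv w := fun w hw =>
      le_absv (rl_mul_le_left hw)
        (le_rdiv_one_of_left (rl_mul_le_one (rl_mul_le_one hw hw) hw))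
        (rl_mul_le_one hw hw)
    have h2 : u * u ⊔ v * v = 1 := by
      apply le_antisymm (sup_le (rl_mul_le_one hu1 hu1) (rl_mul_le_one hv1 hv1))
      have huvle : u * v ≤ u * u ⊔ v * v := by
        calc u * v = u * (u ⊔ v) * v := by rw [huv, mul_one]
          _ = u * u * v ⊔ u * v * v := by rw [rl_mul_sup, rl_sup_mul]
          _ ≤ u * u ⊔ v * v := sup_le (le_trans (rl_mul_le_left hv1) le_sup_left)
              (le_trans (rl_mul_le_mul (rl_mul_le_right hu1) le_rfl) le_sup_right)
      have hvule : v * u ≤ u * u ⊔ v * v := by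
        calc v * u = v * (u ⊔ v) * u := by rw [huv, mul_one]
          _ = v * u * u ⊔ v * v * u := by rw [rl_mul_sup, rl_sup_mul]
          _ ≤ u * u ⊔ v * v := sup_le
              (le_trans (rl_mul_le_mul (rl_mul_le_right hv1) le_rfl) le_sup_left)
              (le_trans (rl_mul_le_left hu1) le_sup_right)
      calc (1:α) = (u ⊔ v) * (u ⊔ v) := by rw [huv, one_mul]
        _ = u * u ⊔ u * v ⊔ (v * u ⊔ v * v) := by rw [rl_sup_mul, rl_mul_sup, rl_mul_sup]
        _ ≤ u * u ⊔ v * v := sup_le (sup_le le_sup_left huvle) (sup_le hvule le_sup_right)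
    apply le_antisymm (sup_le (absv_le_one u) (absv_le_one v))
    calc (1:α) = u * u ⊔ v * v := h2.symm
      _ ≤ absv u ⊔ absv v := sup_le_sup (hsq u hu1) (hsq v hv1)
  tfae_have 4 → 2 := by
    intro h4 a b hab
    rcases h4 (absv a) (absv b) with hu | hu
    · right
      have hm : (absv a ⊔ absv b) * (ldiv (absv a) (absv b) ⊓ 1) ∈ H := hH.mul_mem hab hu
      have hle : (absv a ⊔ absv b) * (ldiv (absv a) (absv b) ⊓ 1) ≤ absv b := by
        rw [rl_sup_mul]
        exact sup_le (le_trans (rl_mul_le_mul le_rfl inf_le_left) (ldiv_iff.mpr le_rfl))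
          (rl_mul_le_left inf_le_right)
      exact mem_of_absv_mem hH (hH.convex hm hH.one_mem hle (absv_le_one b))
    · left
      have hm : (absv b ⊔ absv a) * (ldiv (absv b) (absv a) ⊓ 1) ∈ H :=
        hH.mul_mem (by rw [sup_comm]; exact hab) hu
      have hle : (absv b ⊔ absv a) * (ldiv (absv b) (absv a) ⊓ 1) ≤ absv a := by
        rw [rl_sup_mul]
        exact sup_le (le_trans (rl_mul_le_mul le_rfl inf_le_left) (ldiv_iff.mpr le_rfl))
          (rl_mul_le_left inf_le_right)
      exact mem_of_absv_mem hH (hH.convex hm hH.one_mem hle (absv_le_one a))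
  tfae_have 2 → 1 := by
    intro h2 X Y hX hY hXY
    by_contra hc
    push_neg at hc
    obtain ⟨x, hxX, hxH⟩ := Set.not_subset.mp hc.1
    obtain ⟨y, hyY, hyH⟩ := Set.not_subset.mp hc.2
    have hs1 : absv x ⊔ absv y ≤ 1 := sup_le (absv_le_one x) (absv_le_one y)
    have hsx : absv x ⊔ absv y ∈ X :=
      hX.convex (absv_mem hX hxX) hX.one_mem le_sup_left hs1
    have hsy : absv x ⊔ absv y ∈ Y :=
      hY.convex (absv_mem hY hyY) hY.one_mem le_sup_right hs1
    rcases h2 x y (hXY ⟨hsx, hsy⟩) with h | h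
    exacts [hxH h, hyH h]
  tfae_have 1 → 4 := by
    intro h1 a b
    set u := ldiv a b ⊓ 1 with hu_def
    set v := ldiv b a ⊓ 1 with hv_def
    have hu1 : u ≤ 1 := inf_le_right
    have hv1 : v ≤ 1 := inf_le_right
    have huv : u ⊔ v = 1 := hpre a b
    have hX : IsConvexSubalgebra (genSet {u}) :=
      genSet_isConvex hec (by intro s hs; rw [Set.mem_singleton_iff] at hs; exact hs ▸ hu1)
    have hY : IsConvexSubalgebra (genSet {v}) :=
      genSet_isConvex hec (by intro s hs; rw [Set.mem_singleton_iff] at hs; exact hs ▸ hv1)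
    have hsub : genSet {u} ∩ genSet {v} ⊆ H := by
      rintro x ⟨⟨lu, hlu, hpu⟩, ⟨lv, hlv, hpv⟩⟩
      have h1' : u ^ lu.length ≤ absv x := by
        rw [← rl_prod_const (fun w hw => Set.mem_singleton_iff.mp (hlu w hw))]
        exact hpu
      have h2' : v ^ lv.length ≤ absv x := by
        rw [← rl_prod_const (fun w hw => Set.mem_singleton_iff.mp (hlv w hw))]
        exact hpv
      have habs : absv x = 1 := by
        apply le_antisymm (absv_le_one x)
        calc (1:α) = u ^ lu.length ⊔ v ^ lv.length :=
              (rl_sup_pow_one hu1 hv1 huv lu.length lv.length).symm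
          _ ≤ absv x := sup_le h1' h2'
      exact mem_of_absv_mem hH (habs ▸ hH.one_mem)
    rcases h1 _ _ hX hY hsub with h | h
    · exact Or.inl (h ⟨[u], by simp, by simpa using le_self_absv hu1⟩)
    · exact Or.inr (h ⟨[v], by simp, by simpa using le_self_absv hv1⟩)
  tfae_have 4 → 5 := by
    intro h4 X hXmem Y hYmem _
    obtain ⟨hXc, hHX⟩ := hXmem
    obtain ⟨hYc, hHY⟩ := hYmem
    by_contra hc
    push_neg at hc
    obtain ⟨x, hxX, hxY⟩ := Set.not_subset.mp hc.1
    obtain ⟨y, hyY, hyX⟩ := Set.not_subset.mp hc.2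
    rcases h4 (absv x) (absv y) with hu | hu
    · apply hyX
      have hm : absv x * (ldiv (absv x) (absv y) ⊓ 1) ∈ X :=
        hXc.mul_mem (absv_mem hXc hxX) (hHX hu)
      have hle : absv x * (ldiv (absv x) (absv y) ⊓ 1) ≤ absv y :=
        le_trans (rl_mul_le_mul le_rfl inf_le_left) (ldiv_iff.mpr le_rfl)
      exact mem_of_absv_mem hXc (hXc.convex hm hXc.one_mem hle (absv_le_one y))
    · apply hxY
      have hm : absv y * (ldiv (absv y) (absv x) ⊓ 1) ∈ Y :=
        hYc.mul_mem (absv_mem hYc hyY) (hHY hu)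
      have hle : absv y * (ldiv (absv y) (absv x) ⊓ 1) ≤ absv x :=
        le_trans (rl_mul_le_mul le_rfl inf_le_left) (ldiv_iff.mpr le_rfl)
      exact mem_of_absv_mem hYc (hYc.convex hm hYc.one_mem hle (absv_le_one x))
  tfae_have 5 → 4 := by
    intro h5 a b
    by_contra hc
    push_neg at hc
    obtain ⟨hcu, hcv⟩ := hc
    set u := ldiv a b ⊓ 1 with hu_def
    set v := ldiv b a ⊓ 1 with hv_def
    have hu1 : u ≤ 1 := inf_le_right
    have hv1 : v ≤ 1 := inf_le_right
    have huv : u ⊔ v = 1 := hpre a b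
    have hvu : v ⊔ u = 1 := by rw [sup_comm]; exact huv
    set Su : Set α := {w : α | (w ∈ H ∧ w ≤ 1) ∨ w = u} with hSu_def
    set Sv : Set α := {w : α | (w ∈ H ∧ w ≤ 1) ∨ w = v} with hSv_def
    have hSu_le : ∀ s ∈ Su, s ≤ 1 := by
      rintro s (⟨_, h⟩ | rfl)
      exacts [h, hu1]
    have hSv_le : ∀ s ∈ Sv, s ≤ 1 := by
      rintro s (⟨_, h⟩ | rfl)
      exacts [h, hv1]
    have hX : IsConvexSubalgebra (genSet Su) := genSet_isConvex hec hSu_le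
    have hY : IsConvexSubalgebra (genSet Sv) := genSet_isConvex hec hSv_le
    have hHX : H ⊆ genSet Su := by
      intro h hh
      refine ⟨[absv h], ?_, by simp⟩
      intro w hw
      rw [List.mem_singleton] at hw
      subst hw
      exact Or.inl ⟨absv_mem hH hh, absv_le_one h⟩
    have hHY : H ⊆ genSet Sv := by
      intro h hh
      refine ⟨[absv h], ?_, by simp⟩
      intro w hw
      rw [List.mem_singleton] at hw
      subst hw
      exact Or.inl ⟨absv_mem hH hh, absv_le_one h⟩
    have hu_mem : u ∈ genSet Su :=
      ⟨[u], by simp [hSu_def], by simpa using le_self_absv hu1⟩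
    have hv_mem : v ∈ genSet Sv :=
      ⟨[v], by simp [hSv_def], by simpa using le_self_absv hv1⟩
    by_cases hXY : genSet Su = genSet Sv
    · exact hcu (mem_H_of_mem_gen hec hH hu1 hv1 huv (hXY ▸ hu_mem))
    · rcases h5 ⟨hX, hHX⟩ ⟨hY, hHY⟩ hXY with hss | hss
      · exact hcu (mem_H_of_mem_gen hec hH hu1 hv1 huv (hss hu_mem))
      · exact hcv (mem_H_of_mem_gen hec hH hv1 hu1 hvu (hss hv_mem))
  tfae_finish
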